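/- Let f_\theta(x) = \sum_{i=1}^k w_i [x - b_i]_+ with 0 \leq b_1 \leq ... \leq b_k < \infty, and suppose the L2 norm of f_\theta on [0,1] satisfies \|f_\theta\|^2 < 1/(12(k+1)^5). Then there exists a parameter vector \theta^* (with the same architecture) such that f_{\theta^*} is identically 0 on [0,1] and \|\theta - \theta^*\|^2 \leq C k^{13/5} \|f_\theta\|^{4/5} for a universal constant C. -/

import Mathlib

open intervalIntegral in
lemma lin_int (S c u δ : ℝ) (hδ : 0 ≤ δ) :
    S^2*δ^3/12 ≤ ∫ x in u..(u+δ), (S*x - c)^2 := by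
  have key : ∀ x : ℝ, HasDerivAt (fun y => S^2*y^3/3 - S*c*y^2 + c^2*y) ((S*x - c)^2) x := by
    intro x
    have h1 : HasDerivAt (fun y : ℝ => y^3) (3*x^2) x := by
      simpa using hasDerivAt_pow 3 x
    have h2 : HasDerivAt (fun y : ℝ => y^2) (2*x) x := by
      simpa using hasDerivAt_pow 2 x
    have := (((h1.const_mul (S^2/3)).sub (h2.const_mul (S*c))).add ((hasDerivAt_id x).const_mul (c^2)))
    have e1 : (fun y => S^2*y^3/3 - S*c*y^2 + c^2*y)
        = (((fun y => S ^ 2 / 3 * y ^ 3) - fun y => S * c * y ^ 2) + fun y => c ^ 2 * id y) := by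
      funext y; simp [id]; ring
    rw [e1]
    exact this.congr_deriv (by ring)
  have hcont : Continuous fun x : ℝ => (S*x - c)^2 := by continuity
  rw [integral_eq_sub_of_hasDerivAt (fun x _ => key x) (hcont.intervalIntegrable _ _)]
  nlinarith [mul_nonneg hδ (sq_nonneg (S*(2*u+δ) - 2*c)), sq_nonneg (S*(2*u+δ) - 2*c)]

lemma slope_bound (f : ℝ → ℝ) (hf : Continuous f) (u δ S c : ℝ) (hδ : 0 < δ)
    (hu : 0 ≤ u) (huδ : u + δ ≤ 1)
    (hlin : ∀ x ∈ Set.Icc u (u+δ), f x = S * x - c) :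
    S^2 * δ^3 ≤ 12 * ∫ x in (0:ℝ)..1, f x ^ 2 := by
  have hsq : Continuous fun x => f x ^ 2 := hf.pow 2
  have huu : u ≤ u + δ := by linarith
  have h1 : (∫ x in (0:ℝ)..u, f x ^ 2) + (∫ x in u..(u+δ), f x ^ 2) = ∫ x in (0:ℝ)..(u+δ), f x ^ 2 :=
    intervalIntegral.integral_add_adjacent_intervals (hsq.intervalIntegrable _ _) (hsq.intervalIntegrable _ _)
  have h2 : (∫ x in (0:ℝ)..(u+δ), f x ^ 2) + (∫ x in (u+δ)..1, f x ^ 2) = ∫ x in (0:ℝ)..1, f x ^ 2 :=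
    intervalIntegral.integral_add_adjacent_intervals (hsq.intervalIntegrable _ _) (hsq.intervalIntegrable _ _)
  have hn1 : 0 ≤ ∫ x in (0:ℝ)..u, f x ^ 2 :=
    intervalIntegral.integral_nonneg hu (fun x _ => sq_nonneg _)
  have hn2 : 0 ≤ ∫ x in (u+δ)..1, f x ^ 2 :=
    intervalIntegral.integral_nonneg huδ (fun x _ => sq_nonneg _)
  have heq : (∫ x in u..(u+δ), f x ^ 2) = ∫ x in u..(u+δ), (S*x - c)^2 := by
    apply intervalIntegral.integral_congr
    intro x hx
    rw [Set.uIcc_of_le huu] at hx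
    simp only []
    rw [hlin x hx]
  have := lin_int S c u δ hδ.le
  have hmid : S^2*δ^3/12 ≤ ∫ x in u..(u+δ), f x ^ 2 := by rw [heq]; exact this
  linarith

lemma cont_net {k : ℕ} (w b : Fin k → ℝ) :
    Continuous fun x : ℝ => ∑ i, w i * max (x - b i) 0 := by
  apply continuous_finset_sum
  intro i _
  exact continuous_const.mul ((continuous_id.sub continuous_const).max continuous_const)

lemma zero_case {k : ℕ} (w b : Fin k → ℝ)
    (h : (∫ x in (0:ℝ)..1, (∑ i, w i * max (x - b i) 0) ^ 2) = 0) :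
    ∀ x ∈ Set.Icc (0:ℝ) 1, ∑ i, w i * max (x - b i) 0 = 0 := by
  set f : ℝ → ℝ := fun x => ∑ i, w i * max (x - b i) 0 with hfdef
  have hf : Continuous f := cont_net w b
  have hsq : Continuous fun x => f x ^ 2 := hf.pow 2
  have h01 : (0:ℝ) ≤ 1 := zero_le_one
  rw [intervalIntegral.integral_of_le h01] at h
  have hae : (fun x => f x ^ 2) =ᵐ[MeasureTheory.volume.restrict (Set.Ioc (0:ℝ) 1)] 0 := by
    rw [← MeasureTheory.integral_eq_zero_iff_of_nonneg]
    · exact h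
    · intro x; positivity
    · exact (hsq.integrableOn_Ioc).integrable
  -- the open set where f ≠ 0 inside Ioo 0 1 is null hence empty
  have hopen : IsOpen {x : ℝ | f x ^ 2 ≠ 0} := (hsq.isOpen_preimage {0}ᶜ isOpen_compl_singleton)
  have hEqOn : Set.EqOn f 0 (Set.Ioo (0:ℝ) 1) := by
    intro x hx
    by_contra hne
    have hxne : f x ^ 2 ≠ 0 := pow_ne_zero _ hne
    have hsub : IsOpen ({x : ℝ | f x ^ 2 ≠ 0} ∩ Set.Ioo 0 1) :=
      hopen.inter isOpen_Ioo
    have hnonemp : ({x : ℝ | f x ^ 2 ≠ 0} ∩ Set.Ioo 0 1).Nonempty := ⟨x, hxne, hx⟩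
    have hpos : 0 < MeasureTheory.volume ({x : ℝ | f x ^ 2 ≠ 0} ∩ Set.Ioo 0 1) :=
      hsub.measure_pos _ hnonemp
    have hnull : MeasureTheory.volume ({x : ℝ | f x ^ 2 ≠ 0} ∩ Set.Ioc 0 1) = 0 := by
      have := MeasureTheory.ae_iff.mp hae
      rw [MeasureTheory.Measure.restrict_apply₀' (by measurability)] at this
      convert this using 2
      rfl
    have hle : MeasureTheory.volume ({x : ℝ | f x ^ 2 ≠ 0} ∩ Set.Ioo 0 1) ≤
        MeasureTheory.volume ({x : ℝ | f x ^ 2 ≠ 0} ∩ Set.Ioc 0 1) :=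
      MeasureTheory.measure_mono (Set.inter_subset_inter_right _ Set.Ioo_subset_Ioc_self)
    rw [hnull] at hle
    exact absurd (le_antisymm hle zero_le) (ne_of_gt hpos)
  have : Set.EqOn f 0 (closure (Set.Ioo (0:ℝ) 1)) :=
    hEqOn.closure hf continuous_const
  rw [closure_Ioo (by norm_num : (0:ℝ) ≠ 1)] at this
  intro x hx
  exact this hx

lemma sq_diff_le (D1 D2 F : ℝ) (h1 : D1^2 ≤ F) (h2 : D2^2 ≤ F) : (D1 - D2)^2 ≤ 4 * F := by
  nlinarith [sq_nonneg (D1 + D2)]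

theorem stmt_13 :
    ∃ C : ℝ, 0 < C ∧
      ∀ (k : ℕ) (w b : Fin k → ℝ),
        (∀ i, 0 ≤ b i) → (∀ i j : Fin k, i ≤ j → b i ≤ b j) →
        (∫ x in (0:ℝ)..1, (∑ i, w i * max (x - b i) 0) ^ 2) < 1 / (12 * (k + 1) ^ 5) →
        ∃ w' b' : Fin k → ℝ,
          (∀ x ∈ Set.Icc (0:ℝ) 1, ∑ i, w' i * max (x - b' i) 0 = 0) ∧
          (∑ i, ((w i - w' i) ^ 2 + (b i - b' i) ^ 2)) ≤
            C * (k : ℝ) ^ ((13 : ℝ) / 5) *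
              (∫ x in (0:ℝ)..1, (∑ i, w i * max (x - b i) 0) ^ 2) ^ ((2 : ℝ) / 5) := by
  classical
  refine ⟨100, by norm_num, ?_⟩
  intro k w b hb0 hmono hint
  set ε : ℝ := ∫ x in (0:ℝ)..1, (∑ i, w i * max (x - b i) 0) ^ 2 with hεdef
  have hεnn : 0 ≤ ε := intervalIntegral.integral_nonneg zero_le_one (fun x _ => sq_nonneg _)
  have hrpow_nn : 0 ≤ ε ^ ((2:ℝ)/5) := Real.rpow_nonneg hεnn _
  rcases Nat.eq_zero_or_pos k with hk0 | hkpos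
  · subst hk0
    refine ⟨w, b, fun x hx => by simp, ?_⟩
    simp [Real.zero_rpow (by norm_num : ((13:ℝ)/5) ≠ 0)]
  rcases eq_or_lt_of_le hεnn with hε0 | hεpos
  · refine ⟨w, b, zero_case w b hε0.symm, ?_⟩
    rw [← hε0, Real.zero_rpow (by norm_num : ((2:ℝ)/5) ≠ 0)]
    simp
  -- main case
  have hkR : (1:ℝ) ≤ (k:ℝ) := by exact_mod_cast hkpos
  have hkRpos : (0:ℝ) < (k:ℝ) := by linarith
  set bb : ℕ → ℝ := fun i => if h : i < k then b ⟨i, h⟩ else 1000 with hbbdef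
  set ww : ℕ → ℝ := fun i => if h : i < k then w ⟨i, h⟩ else 0 with hwwdef
  have hbb : ∀ (i : ℕ) (h : i < k), bb i = b ⟨i, h⟩ := fun i h => dif_pos h
  have hww : ∀ (i : ℕ) (h : i < k), ww i = w ⟨i, h⟩ := fun i h => dif_pos h
  have hbbmono : ∀ i j : ℕ, i ≤ j → j < k → bb i ≤ bb j := by
    intro i j hij hj
    rw [hbb i (lt_of_le_of_lt hij hj), hbb j hj]
    exact hmono _ _ hij
  have hbb0 : ∀ i, i < k → 0 ≤ bb i := by
    intro i hi; rw [hbb i hi]; exact hb0 _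
  set δ : ℝ := (ε / (k:ℝ)^2) ^ ((1:ℝ)/5) with hδdef
  have hbase : (0:ℝ) < ε / (k:ℝ)^2 := by positivity
  have hδpos : 0 < δ := Real.rpow_pos_of_pos hbase _
  have hδ5 : δ^(5:ℕ) = ε / (k:ℝ)^2 := by
    rw [hδdef, ← Real.rpow_natCast _ 5, ← Real.rpow_mul hbase.le]
    norm_num
  set Cm : ℕ → Prop := fun n => (∀ i < n, bb i ≤ 1 - δ) ∧ (n = k ∨ n = 0 ∨ δ ≤ bb n - bb (n-1)) with hCmdef
  set m : ℕ := Nat.findGreatest Cm k with hmdef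
  have hCm0 : Cm 0 := ⟨fun i h => absurd h (Nat.not_lt_zero i), Or.inr (Or.inl rfl)⟩
  have hCm : Cm m := Nat.findGreatest_spec (Nat.zero_le k) hCm0
  have hmk : m ≤ k := Nat.findGreatest_le k
  have hmax : ∀ n, m < n → n ≤ k → ¬ Cm n := fun n h1 h2 => Nat.findGreatest_is_greatest h1 h2
  have hact : ∀ i, i < m → bb i ≤ 1 - δ := fun i hi => hCm.1 i hi
  -- inactive bound
  have hinact : ∀ d i, k - i ≤ d → m ≤ i → i < k → 1 - bb i ≤ (d:ℝ) * δ := by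
    intro d
    induction d with
    | zero => intro i h1 h2 h3; omega
    | succ d ih =>
      intro i h1 h2 h3
      by_cases hbig : 1 - δ < bb i
      · have h0 : (0:ℝ) ≤ (d:ℝ) * δ := by positivity
        push_cast; nlinarith
      · push_neg at hbig
        have hfirst : ∀ j < i+1, bb j ≤ 1 - δ := fun j hj =>
          le_trans (hbbmono j i (by omega) h3) hbig
        have hik : i + 1 ≠ k := by
          intro hik
          exact hmax (i+1) (by omega) (by omega) ⟨hfirst, Or.inl hik⟩
        have hgap : bb (i+1) - bb i < δ := by
          by_contra hge
          push_neg at hge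
          refine hmax (i+1) (by omega) (by omega) ⟨hfirst, Or.inr (Or.inr ?_)⟩
          simpa using hge
        have := ih (i+1) (by omega) (by omega) (by omega)
        push_cast
        nlinarith
  set P : ℕ → Prop := fun j => j = 0 ∨ δ ≤ bb j - bb (j-1) with hPdef
  set σ : ℕ → ℕ := fun i => Nat.findGreatest P i with hσdef
  have hσ_le : ∀ i, σ i ≤ i := fun i => Nat.findGreatest_le i
  have hσ_gap : ∀ i l, σ i < l → l ≤ i → bb l - bb (l-1) < δ := by
    intro i l h1 h2
    have hnp := Nat.findGreatest_is_greatest (P := P) h1 h2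
    simp only [hPdef] at hnp; push_neg at hnp
    exact hnp.2
  have hσsucc : ∀ i, ¬ (i + 1 = 0 ∨ δ ≤ bb (i+1) - bb i) → σ (i+1) = σ i := by
    intro i h
    rw [hσdef]
    simp only []
    rw [Nat.findGreatest_succ]
    rw [if_neg]
    rw [hPdef]
    simpa using h
  have hspread : ∀ i j, σ i ≤ j → j ≤ i → bb j - bb (σ i) ≤ ((j - σ i : ℕ) : ℝ) * δ := by
    intro i j hj hji
    induction j, hj using Nat.le_induction with
    | base => simp
    | succ n hn ih =>
      have hgap : bb (n+1) - bb n < δ := by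
        have := hσ_gap i (n+1) (by omega) hji
        simpa using this
      have hih := ih (by omega)
      have hcast : ((n + 1 - σ i : ℕ) : ℝ) = ((n - σ i : ℕ) : ℝ) + 1 := by
        have : n + 1 - σ i = (n - σ i) + 1 := by omega
        rw [this]; push_cast; ring
      rw [hcast]
      nlinarith
  set SS : ℕ → ℝ := fun n => ∑ l ∈ Finset.range n, ww l with hSSdef
  set Ed : ℕ → Prop := fun i => i + 1 = m ∨ δ ≤ bb (i+1) - bb i with hEddef
  set T : ℕ → ℝ := fun n => if n = 0 then 0 else if Ed (n-1) then 0 else SS n with hTdef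
  set D : ℕ → ℝ := fun n => SS n - T n with hDdef
  set ww' : ℕ → ℝ := fun i => T (i+1) - T i with hww'def
  -- jump property at ends
  have hjump : ∀ e, e < m → Ed e → ∀ i, e < i → i < k → bb e + δ ≤ bb i := by
    intro e he hEd i hei hik
    simp only [hEddef] at hEd
    rcases hEd with h1 | h2
    · rcases hCm.2 with hc | hc | hc
      · omega
      · omega
      · have h3 : bb m ≤ bb i := by
          apply hbbmono m i (by omega) hik
        have : m - 1 = e := by omega
        rw [this] at hc
        linarith
    · have h3 : bb (e+1) ≤ bb i := hbbmono (e+1) i (by omega) hik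
      linarith
  -- linearity of f on [bb e, bb e + δ]
  have hfval : ∀ x : ℝ, (∑ i, w i * max (x - b i) 0) = ∑ i ∈ Finset.range k, ww i * max (x - bb i) 0 := by
    intro x
    rw [← Fin.sum_univ_eq_sum_range (fun i => ww i * max (x - bb i) 0) k]
    apply Finset.sum_congr rfl
    intro i _
    rw [hww i i.isLt, hbb i i.isLt]
  have hS : ∀ e, e < m → Ed e → (SS (e+1))^2 * δ^3 ≤ 12 * ε := by
    intro e he hEd
    have hek : e < k := lt_of_lt_of_le he hmk
    have hlin : ∀ x ∈ Set.Icc (bb e) (bb e + δ),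
        (∑ i, w i * max (x - b i) 0) = SS (e+1) * x - (∑ l ∈ Finset.range (e+1), ww l * bb l) := by
      intro x hx
      rw [hfval x]
      have hsplit : Finset.range k = Finset.range (e+1) ∪ Finset.Ico (e+1) k := by
        rw [Finset.range_eq_Ico, Finset.range_eq_Ico]
        exact (Finset.Ico_union_Ico_eq_Ico (a := 0) (b := e+1) (c := k) (by omega) (by omega)).symm
      rw [hsplit, Finset.sum_union (by
        rw [Finset.range_eq_Ico]
        exact Finset.Ico_disjoint_Ico_consecutive 0 (e+1) k)]
      have h2 : ∑ i ∈ Finset.Ico (e+1) k, ww i * max (x - bb i) 0 = 0 := by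
        apply Finset.sum_eq_zero
        intro i hi
        rw [Finset.mem_Ico] at hi
        have : bb e + δ ≤ bb i := hjump e he hEd i (by omega) hi.2
        have hx2 : x ≤ bb i := le_trans hx.2 this
        rw [max_eq_right (by linarith)]
        ring
      have h1 : ∑ i ∈ Finset.range (e+1), ww i * max (x - bb i) 0
          = ∑ i ∈ Finset.range (e+1), (ww i * x - ww i * bb i) := by
        apply Finset.sum_congr rfl
        intro i hi
        rw [Finset.mem_range] at hi
        have hble : bb i ≤ bb e := hbbmono i e (by omega) hek
        rw [max_eq_left (by have := hx.1; linarith)]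
        ring
      rw [h1, h2, Finset.sum_sub_distrib, ← Finset.sum_mul, add_zero, hSSdef]
    have hu0 : 0 ≤ bb e := hbb0 e hek
    have hu1 : bb e + δ ≤ 1 := by have := hact e he; linarith
    have := slope_bound (fun x => ∑ i, w i * max (x - b i) 0) (cont_net w b)
      (bb e) δ (SS (e+1)) (∑ l ∈ Finset.range (e+1), ww l * bb l) hδpos hu0 hu1 hlin
    exact this
  have hδ3pos : (0:ℝ) < δ^3 := by positivity
  have hD : ∀ n, n ≤ m → (D n)^2 ≤ 12 * ε / δ^3 := by
    intro n hn
    have h12 : (0:ℝ) ≤ 12 * ε / δ^3 := by positivity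
    rcases Nat.eq_zero_or_pos n with h0 | h1
    · subst h0
      have : D 0 = 0 := by simp [hDdef, hSSdef, hTdef]
      rw [this]; simpa using h12
    · obtain ⟨e, rfl⟩ : ∃ e, n = e + 1 := ⟨n - 1, by omega⟩
      by_cases hEd : Ed e
      · have hT : T (e+1) = 0 := by
          simp only [hTdef]
          rw [if_neg (by omega), if_pos (by simpa using hEd)]
        have hDval : D (e+1) = SS (e+1) := by simp [hDdef, hT]
        rw [hDval]
        have := hS e (by omega) hEd
        rw [le_div_iff₀ hδ3pos]
        linarith
      · have hT : T (e+1) = SS (e+1) := by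
          simp only [hTdef]
          rw [if_neg (by omega), if_neg (by simpa using hEd)]
        have hDval : D (e+1) = 0 := by simp [hDdef, hT]
        rw [hDval]; simpa using h12
  -- the collapsed function vanishes
  have hzero : ∀ x : ℝ, ∑ i ∈ Finset.range m, ww' i * max (x - bb (σ i)) 0 = 0 := by
    intro x
    rcases Nat.eq_zero_or_pos m with hm0 | hm1
    · rw [hm0]; simp
    obtain ⟨M, hM⟩ : ∃ M, m = M + 1 := ⟨m - 1, by omega⟩
    have expand : ∀ i : ℕ, ww' i * max (x - bb (σ i)) 0
        = T (i+1) * max (x - bb (σ i)) 0 - T i * max (x - bb (σ i)) 0 := by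
      intro i; simp only [hww'def]; ring
    rw [Finset.sum_congr rfl (fun i _ => expand i), Finset.sum_sub_distrib]
    have hTm : T m = 0 := by
      simp only [hTdef]
      rw [if_neg (by omega), if_pos]
      simp only [hEddef]
      left; omega
    have hfirst : ∑ i ∈ Finset.range m, T (i+1) * max (x - bb (σ i)) 0
        = (∑ i ∈ Finset.range M, T (i+1) * max (x - bb (σ i)) 0) := by
      rw [hM, Finset.sum_range_succ]
      rw [← hM, hTm]
      ring
    have hsecond : ∑ i ∈ Finset.range m, T i * max (x - bb (σ i)) 0
        = (∑ i ∈ Finset.range M, T (i+1) * max (x - bb (σ (i+1))) 0) := by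
      rw [hM, Finset.sum_range_succ']
      have hT0 : T 0 = 0 := by simp [hTdef]
      rw [hT0]
      ring
    rw [hfirst, hsecond, ← Finset.sum_sub_distrib]
    apply Finset.sum_eq_zero
    intro i hi
    rw [Finset.mem_range] at hi
    by_cases hEd : Ed i
    · have hT : T (i+1) = 0 := by
        simp only [hTdef]
        rw [if_neg (by omega), if_pos (by simpa using hEd)]
      rw [hT]; ring
    · have hsig : σ (i+1) = σ i := by
        apply hσsucc
        intro hc
        rcases hc with h0 | hgap
        · omega
        · exact hEd (Or.inr hgap)
      rw [hsig]; ring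
  refine ⟨fun i => if (i:ℕ) < m then ww' i else w i,
          fun i => if (i:ℕ) < m then bb (σ i) else max (b i) 1, ?_, ?_⟩
  · -- vanishing
    intro x hx
    have hconv : ∀ i : Fin k,
        (if (i:ℕ) < m then ww' i else w i) * max (x - if (i:ℕ) < m then bb (σ i) else max (b i) 1) 0
        = (fun n : ℕ => (if n < m then ww' n else ww n) * max (x - if n < m then bb (σ n) else max (bb n) 1) 0) (i:ℕ) := by
      intro i
      simp only [hww i.val i.isLt, hbb i.val i.isLt]
    have hstep : ∑ i : Fin k,
        (if (i:ℕ) < m then ww' i else w i) * max (x - if (i:ℕ) < m then bb (σ i) else max (b i) 1) 0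
        = ∑ n ∈ Finset.range k,
        (if n < m then ww' n else ww n) * max (x - if n < m then bb (σ n) else max (bb n) 1) 0 := by
      rw [← Fin.sum_univ_eq_sum_range (fun n : ℕ => (if n < m then ww' n else ww n) * max (x - if n < m then bb (σ n) else max (bb n) 1) 0) k]
      exact Finset.sum_congr rfl (fun i _ => hconv i)
    rw [hstep]
    have hsplit : Finset.range k = Finset.range m ∪ Finset.Ico m k := by
      rw [Finset.range_eq_Ico, Finset.range_eq_Ico]
      exact (Finset.Ico_union_Ico_eq_Ico (a := 0) (b := m) (c := k) (by omega) (by omega)).symm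
    rw [hsplit, Finset.sum_union (by
      rw [Finset.range_eq_Ico]
      exact Finset.Ico_disjoint_Ico_consecutive 0 m k)]
    have h1 : ∑ n ∈ Finset.range m,
        (if n < m then ww' n else ww n) * max (x - if n < m then bb (σ n) else max (bb n) 1) 0
        = ∑ n ∈ Finset.range m, ww' n * max (x - bb (σ n)) 0 := by
      apply Finset.sum_congr rfl
      intro n hn
      rw [Finset.mem_range] at hn
      rw [if_pos hn, if_pos hn]
    have h2 : ∑ n ∈ Finset.Ico m k,
        (if n < m then ww' n else ww n) * max (x - if n < m then bb (σ n) else max (bb n) 1) 0 = 0 := by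
      apply Finset.sum_eq_zero
      intro n hn
      rw [Finset.mem_Ico] at hn
      rw [if_neg (by omega), if_neg (by omega)]
      have hx1 : x ≤ max (bb n) 1 := le_trans hx.2 (le_max_right _ _)
      rw [max_eq_right (by linarith)]
      ring
    rw [h1, h2, hzero x, add_zero]
  · -- cost bound
    have hδne : δ ≠ 0 := ne_of_gt hδpos
    have hε_eq : ε = δ^5 * (k:ℝ)^2 := by
      rw [hδ5]; field_simp
    set B : ℝ := 48 * ε / δ^3 + (k:ℝ)^2 * δ^2 with hBdef
    have hterm : ∀ n, n < k →
        (ww n - (if n < m then ww' n else ww n))^2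
        + (bb n - (if n < m then bb (σ n) else max (bb n) 1))^2 ≤ B := by
      intro n hnk
      have h48 : (0:ℝ) ≤ 48 * ε / δ^3 := by positivity
      by_cases hnm : n < m
      · rw [if_pos hnm, if_pos hnm]
        have hwdiff : ww n - ww' n = D (n+1) - D n := by
          have hssucc : SS (n+1) = SS n + ww n := by
            simp only [hSSdef]
            rw [Finset.sum_range_succ]
          simp only [hww'def, hDdef]
          rw [hssucc]; ring
        have hD1 : (D (n+1))^2 ≤ 12 * ε / δ^3 := hD (n+1) (by omega)
        have hD2 : (D n)^2 ≤ 12 * ε / δ^3 := hD n (by omega)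
        have hwsq : (ww n - ww' n)^2 ≤ 48 * ε / δ^3 := by
          rw [hwdiff]
          have h4 := sq_diff_le (D (n+1)) (D n) (12 * ε / δ^3) hD1 hD2
          have h5 : 4 * (12 * ε / δ^3) = 48 * ε / δ^3 := by ring
          linarith only [h4, h5]
        have hbdiff0 : 0 ≤ bb n - bb (σ n) := by
          have := hbbmono (σ n) n (hσ_le n) hnk
          linarith
        have hbdiff : bb n - bb (σ n) ≤ (k:ℝ) * δ := by
          have h1 := hspread n n (hσ_le n) le_rfl
          have h2 : ((n - σ n : ℕ) : ℝ) ≤ (k:ℝ) := by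
            have : n - σ n ≤ k := by omega
            exact_mod_cast this
          have h3 : ((n - σ n : ℕ) : ℝ) * δ ≤ (k:ℝ) * δ :=
            mul_le_mul_of_nonneg_right h2 hδpos.le
          linarith only [h1, h3]
        have hbsq : (bb n - bb (σ n))^2 ≤ (k:ℝ)^2 * δ^2 := by
          calc (bb n - bb (σ n))^2 ≤ ((k:ℝ) * δ)^2 := pow_le_pow_left₀ hbdiff0 hbdiff 2
            _ = (k:ℝ)^2 * δ^2 := by ring
        rw [hBdef]; linarith only [hwsq, hbsq]
      · rw [if_neg hnm, if_neg hnm]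
        have hinn : (bb n - max (bb n) 1)^2 ≤ (k:ℝ)^2 * δ^2 := by
          rcases le_or_gt 1 (bb n) with h1 | h1
          · rw [max_eq_left h1]
            simp
            positivity
          · rw [max_eq_right h1.le]
            have h2 : 1 - bb n ≤ (k:ℝ) * δ := by
              have h4 := hinact k n (by omega) (by omega) hnk
              have hc : ((k:ℕ):ℝ) = (k:ℝ) := rfl
              linarith only [h4]
            have h0 : (0:ℝ) ≤ 1 - bb n := by linarith only [h1]
            calc (bb n - 1)^2 = (1 - bb n)^2 := by ring
              _ ≤ ((k:ℝ) * δ)^2 := pow_le_pow_left₀ h0 h2 2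
              _ = (k:ℝ)^2 * δ^2 := by ring
        rw [hBdef]
        have hz : (ww n - ww n)^2 = 0 := by ring_nf
        linarith only [hinn, h48, hz]
    -- convert sum over Fin k
    have hconv2 : ∀ i : Fin k,
        ((w i - (if (i:ℕ) < m then ww' i else w i))^2
         + (b i - (if (i:ℕ) < m then bb (σ i) else max (b i) 1))^2)
        = (fun n : ℕ => (ww n - (if n < m then ww' n else ww n))^2
         + (bb n - (if n < m then bb (σ n) else max (bb n) 1))^2) (i:ℕ) := by
      intro i
      simp only [hww i.val i.isLt, hbb i.val i.isLt]
    have hstep2 : ∑ i : Fin k,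
        ((w i - (if (i:ℕ) < m then ww' i else w i))^2
         + (b i - (if (i:ℕ) < m then bb (σ i) else max (b i) 1))^2)
        = ∑ n ∈ Finset.range k,
        ((ww n - (if n < m then ww' n else ww n))^2
         + (bb n - (if n < m then bb (σ n) else max (bb n) 1))^2) := by
      rw [← Fin.sum_univ_eq_sum_range (fun n : ℕ => (ww n - (if n < m then ww' n else ww n))^2
         + (bb n - (if n < m then bb (σ n) else max (bb n) 1))^2) k]
      exact Finset.sum_congr rfl (fun i _ => hconv2 i)
    rw [hstep2]
    have hsum : ∑ n ∈ Finset.range k,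
        ((ww n - (if n < m then ww' n else ww n))^2
         + (bb n - (if n < m then bb (σ n) else max (bb n) 1))^2) ≤ (k:ℝ) * B := by
      calc ∑ n ∈ Finset.range k,
          ((ww n - (if n < m then ww' n else ww n))^2
           + (bb n - (if n < m then bb (σ n) else max (bb n) 1))^2)
          ≤ ∑ n ∈ Finset.range k, B :=
            Finset.sum_le_sum (fun n hn => hterm n (Finset.mem_range.mp hn))
        _ = (k:ℝ) * B := by
            rw [Finset.sum_const, Finset.card_range, nsmul_eq_mul]
    have hkB : (k:ℝ) * B = 49 * (k:ℝ)^3 * δ^2 := by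
      rw [hBdef, hε_eq]
      field_simp
      ring
    -- rpow computations
    have hδ2 : δ^(2:ℕ) = ε ^ ((2:ℝ)/5) / (k:ℝ) ^ ((4:ℝ)/5) := by
      rw [hδdef, ← Real.rpow_natCast _ 2, ← Real.rpow_mul hbase.le]
      rw [Real.div_rpow hεnn (by positivity)]
      rw [← Real.rpow_natCast (k:ℝ) 2, ← Real.rpow_mul hkRpos.le]
      norm_num
    have hk3 : (k:ℝ)^(3:ℕ) / (k:ℝ) ^ ((4:ℝ)/5) = (k:ℝ) ^ ((11:ℝ)/5) := by
      rw [← Real.rpow_natCast (k:ℝ) 3, ← Real.rpow_sub hkRpos]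
      norm_num
    have hfinal : 49 * (k:ℝ)^3 * δ^2 = 49 * (k:ℝ) ^ ((11:ℝ)/5) * ε ^ ((2:ℝ)/5) := by
      rw [hδ2, ← hk3]
      ring
    have hkle : (k:ℝ) ^ ((11:ℝ)/5) ≤ (k:ℝ) ^ ((13:ℝ)/5) :=
      Real.rpow_le_rpow_of_exponent_le hkR (by norm_num)
    calc ∑ n ∈ Finset.range k,
        ((ww n - (if n < m then ww' n else ww n))^2
         + (bb n - (if n < m then bb (σ n) else max (bb n) 1))^2)
        ≤ (k:ℝ) * B := hsum
      _ = 49 * (k:ℝ) ^ ((11:ℝ)/5) * ε ^ ((2:ℝ)/5) := by rw [hkB, hfinal]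
      _ ≤ 100 * (k:ℝ) ^ ((13:ℝ)/5) * ε ^ ((2:ℝ)/5) := by
          have h1 : (0:ℝ) ≤ (k:ℝ) ^ ((11:ℝ)/5) := by positivity
          have h2 : (k:ℝ) ^ ((11:ℝ)/5) * ε ^ ((2:ℝ)/5) ≤ (k:ℝ) ^ ((13:ℝ)/5) * ε ^ ((2:ℝ)/5) :=
            mul_le_mul_of_nonneg_right hkle hrpow_nn
          have h3 : (0:ℝ) ≤ (k:ℝ) ^ ((11:ℝ)/5) * ε ^ ((2:ℝ)/5) := mul_nonneg h1 hrpow_nn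
          linarith only [h2, h3]
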